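/- arXiv:1405.7457 — 3 statements merged into one kernel-verified Lean document; each statement's English description precedes it below -/
import Mathlib

section
/- Every envelope point comes from a boundary point of the solid: if M ⊆ ℝ³ is compact and nonempty, I = [t₀,t₁], and A and b are continuous, then the envelope E = frontier(⋃_{t∈I} M(t)) is contained in ⋃_{t∈I} {A(t)·x + b(t) : x ∈ frontier M}. -/
open RealInnerProductSpace Matrix

/-- The action of a matrix on a point of `ℝ³ = EuclideanSpace ℝ (Fin 3)`. -/
noncomputable def act (A : Matrix (Fin 3) (Fin 3) ℝ) (x : EuclideanSpace ℝ (Fin 3)) :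
    EuclideanSpace ℝ (Fin 3) := Matrix.toEuclideanLin A x

lemma act_act (A B : Matrix (Fin 3) (Fin 3) ℝ) (x : EuclideanSpace ℝ (Fin 3)) :
    act A (act B x) = act (A * B) x := by
  simp [act, Matrix.toEuclideanLin_apply, Matrix.mulVec_mulVec]

lemma act_one (x : EuclideanSpace ℝ (Fin 3)) : act 1 x = x := by
  simp [act, Matrix.toEuclideanLin_apply]

lemma continuous_act :
    Continuous fun p : Matrix (Fin 3) (Fin 3) ℝ × EuclideanSpace ℝ (Fin 3) => act p.1 p.2 := by
  have hx : Continuous fun p : Matrix (Fin 3) (Fin 3) ℝ × EuclideanSpace ℝ (Fin 3) =>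
      (WithLp.equiv 2 (Fin 3 → ℝ)) p.2 :=
    (PiLp.continuousLinearEquiv 2 ℝ _).continuous.comp continuous_snd
  have h : Continuous fun p : Matrix (Fin 3) (Fin 3) ℝ × EuclideanSpace ℝ (Fin 3) =>
      (p.1 *ᵥ (WithLp.equiv 2 (Fin 3 → ℝ)) p.2 : Fin 3 → ℝ) := by
    apply continuous_pi
    intro i
    simp only [Matrix.mulVec, dotProduct]
    exact continuous_finset_sum _ fun j _ =>
      ((continuous_apply j).comp ((continuous_apply i).comp continuous_fst)).mul
        ((continuous_apply j).comp hx)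
  have : Continuous fun p : Matrix (Fin 3) (Fin 3) ℝ × EuclideanSpace ℝ (Fin 3) =>
      (PiLp.continuousLinearEquiv 2 ℝ (fun _ : Fin 3 => ℝ)).symm
        (p.1 *ᵥ (WithLp.equiv 2 (Fin 3 → ℝ)) p.2) :=
    (PiLp.continuousLinearEquiv 2 ℝ _).symm.continuous.comp h
  exact this

/-- Every envelope point comes from a boundary point of the solid: if `M ⊆ ℝ³` is compact
and nonempty, `I = [t₀, t₁]`, and `A` and `b` are continuous, then the envelope
`E = frontier (⋃_{t ∈ I} M(t))` is contained in `⋃_{t ∈ I} {A(t)·x + b(t) : x ∈ frontier M}`. -/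
theorem envelope_subset_sweep_of_frontier
    (A : ℝ → Matrix (Fin 3) (Fin 3) ℝ) (b : ℝ → EuclideanSpace ℝ (Fin 3))
    (hA : ∀ t, (A t)ᵀ * A t = 1)
    (hAcont : Continuous A) (hbcont : Continuous b)
    (M : Set (EuclideanSpace ℝ (Fin 3)))
    (hMcpt : IsCompact M) (hMne : M.Nonempty)
    (t₀ t₁ : ℝ) (ht : t₀ < t₁) :
    frontier (⋃ t ∈ Set.Icc t₀ t₁, (fun y => act (A t) y + b t) '' M) ⊆
      ⋃ t ∈ Set.Icc t₀ t₁, (fun y => act (A t) y + b t) '' frontier M := by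
  set V := ⋃ t ∈ Set.Icc t₀ t₁, (fun y => act (A t) y + b t) '' M with hVdef
  have hg : Continuous fun p : ℝ × EuclideanSpace ℝ (Fin 3) => act (A p.1) p.2 + b p.1 :=
    (continuous_act.comp ((hAcont.comp continuous_fst).prodMk continuous_snd)).add
      (hbcont.comp continuous_fst)
  have hVeq : V = (fun p : ℝ × EuclideanSpace ℝ (Fin 3) => act (A p.1) p.2 + b p.1) ''
      (Set.Icc t₀ t₁ ×ˢ M) := by
    ext z
    simp only [hVdef, Set.mem_iUnion, Set.mem_image, Set.mem_prod, Prod.exists]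
    constructor
    · rintro ⟨t, ht', x, hx, rfl⟩; exact ⟨t, x, ⟨ht', hx⟩, rfl⟩
    · rintro ⟨t, x, ⟨ht', hx⟩, rfl⟩; exact ⟨t, ht', x, hx, rfl⟩
  have hVcpt : IsCompact V := hVeq ▸ (isCompact_Icc.prod hMcpt).image hg
  intro p hp
  rw [frontier] at hp
  have hpV : p ∈ V := by rw [← hVcpt.isClosed.closure_eq]; exact hp.1
  rw [hVdef] at hpV
  obtain ⟨t, ht', x, hxM, hpx⟩ : ∃ t ∈ Set.Icc t₀ t₁, ∃ x ∈ M, act (A t) x + b t = p := by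
    simpa using hpV
  have hAAT : A t * (A t)ᵀ = 1 := mul_eq_one_comm.mp (hA t)
  have hgi : ∀ y : EuclideanSpace ℝ (Fin 3), act (A t)ᵀ (act (A t) y + b t - b t) = y := by
    intro y; rw [add_sub_cancel_right, act_act, hA t, act_one]
  have hig : ∀ z : EuclideanSpace ℝ (Fin 3), act (A t) (act (A t)ᵀ (z - b t)) + b t = z := by
    intro z; rw [act_act, hAAT, act_one, sub_add_cancel]
  have hxint : x ∉ interior M := by
    intro hxi
    apply hp.2
    have himg : (fun y => act (A t) y + b t) '' interior M =
        (fun z => act (A t)ᵀ (z - b t)) ⁻¹' interior M := by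
      ext z
      constructor
      · rintro ⟨y, hy, rfl⟩
        simp only [Set.mem_preimage]
        rw [hgi]
        exact hy
      · intro hz; exact ⟨act (A t)ᵀ (z - b t), hz, hig z⟩
    have hopen : IsOpen ((fun y => act (A t) y + b t) '' interior M) := by
      rw [himg]
      exact isOpen_interior.preimage
        ((continuous_act.comp (continuous_const.prodMk (continuous_id.sub continuous_const))))
    have hsub : (fun y => act (A t) y + b t) '' interior M ⊆ V := by
      refine Set.Subset.trans (Set.image_mono interior_subset) ?_
      rw [hVdef]; intro z hz; exact Set.mem_biUnion ht' hz
    exact interior_maximal hsub hopen ⟨x, hxi, hpx⟩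
  have hxfr : x ∈ frontier M := by
    rw [frontier, hMcpt.isClosed.closure_eq]; exact ⟨hxM, hxint⟩
  exact Set.mem_biUnion ht' ⟨x, hxfr, hpx⟩
end

section
/- (Contrapositive form of Proposition 2, outward-moving case.) Let x ∈ M, let U be an open neighborhood of x, and let N₁, …, N_m ∈ ℝ³ be linearly independent vectors such that M ∩ U = (⋂_{i=1}^m {y ∈ ℝ³ : ⟨N_i, y − x⟩ ≤ 0}) ∩ U. Assume A and b are continuous on ℝ and differentiable at t' ∈ I, and set v = γ_x'(t'). If t₀ ≤ t' < t₁ and ⟨A(t')·N_i, v⟩ > 0 for every i = 1, …, m, then γ_x(t') lies in the interior of the swept volume V = ⋃_{t∈I} M(t); in particular γ_x(t') is not on the envelope E. -/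
open RealInnerProductSpace Matrix

lemma act_apply (A : Matrix (Fin 3) (Fin 3) ℝ) (x : EuclideanSpace ℝ (Fin 3)) (j : Fin 3) :
    act A x j = ∑ k, A j k * x k := rfl

lemma act_zero (A : Matrix (Fin 3) (Fin 3) ℝ) : act A 0 = 0 := map_zero _

lemma inner_act_transpose (A : Matrix (Fin 3) (Fin 3) ℝ) (x y : EuclideanSpace ℝ (Fin 3)) :
    ⟪x, act Aᵀ y⟫ = ⟪act A x, y⟫ := by
  simp only [PiLp.inner_apply, RCLike.inner_apply, conj_trivial, act_apply,
    Matrix.transpose_apply, Finset.mul_sum, Finset.sum_mul]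
  rw [Finset.sum_comm]
  exact Finset.sum_congr rfl fun k _ => Finset.sum_congr rfl fun j _ => by ring

lemma hasDerivAt_euclidean {f : ℝ → EuclideanSpace ℝ (Fin 3)} {v : EuclideanSpace ℝ (Fin 3)}
    {t : ℝ} : HasDerivAt f v t ↔ ∀ i, HasDerivAt (fun s => f s i) (v i) t := by
  constructor
  · intro h i
    have he : HasDerivAt (fun s => (EuclideanSpace.equiv (Fin 3) ℝ) (f s))
        ((EuclideanSpace.equiv (Fin 3) ℝ) v) t :=
      ((EuclideanSpace.equiv (Fin 3) ℝ).toContinuousLinearMap.hasFDerivAt).comp_hasDerivAt t h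
    exact hasDerivAt_pi.mp he i
  · intro h
    have h1 : HasDerivAt (fun s => (fun i => f s i)) (fun i => v i) t := hasDerivAt_pi.mpr h
    exact ((EuclideanSpace.equiv (Fin 3) ℝ).symm.toContinuousLinearMap.hasFDerivAt).comp_hasDerivAt
      t h1

lemma hasDerivAt_act {t' : ℝ} (A : ℝ → Matrix (Fin 3) (Fin 3) ℝ)
    (D : Matrix (Fin 3) (Fin 3) ℝ)
    (hA : ∀ i j, HasDerivAt (fun t => A t i j) (D i j) t')
    (u : ℝ → EuclideanSpace ℝ (Fin 3)) (u' : EuclideanSpace ℝ (Fin 3))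
    (hu : HasDerivAt u u' t') :
    HasDerivAt (fun t => act (A t) (u t)) (act D (u t') + act (A t') u') t' := by
  rw [hasDerivAt_euclidean]
  intro j
  have hc : ∀ t, act (A t) (u t) j = ∑ k, A t j k * u t k := fun t => act_apply _ _ _
  simp only [hc]
  have hcomp : (act D (u t') + act (A t') u') j
      = ∑ k, (D j k * u t' k + A t' j k * u' k) := by
    simp [act_apply, Finset.sum_add_distrib]
  rw [hcomp]
  exact HasDerivAt.fun_sum fun k _ => (hA j k).mul (hasDerivAt_euclidean.mp hu k)

/-- `y ↦ act A y + c` is an open map when `A` is orthogonal. -/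
lemma isOpenMap_act_add (A : Matrix (Fin 3) (Fin 3) ℝ) (hA : Aᵀ * A = 1)
    (c : EuclideanSpace ℝ (Fin 3)) :
    IsOpenMap (fun y => act A y + c) := by
  have hA' : A * Aᵀ = 1 := mul_eq_one_comm.mp hA
  have h1 : (Matrix.toEuclideanLin A) ∘ₗ (Matrix.toEuclideanLin Aᵀ) = LinearMap.id := by
    apply LinearMap.ext; intro z
    show act A (act Aᵀ z) = z
    rw [act_act, hA', act_one]
  have h2 : (Matrix.toEuclideanLin Aᵀ) ∘ₗ (Matrix.toEuclideanLin A) = LinearMap.id := by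
    apply LinearMap.ext; intro z
    show act Aᵀ (act A z) = z
    rw [act_act, hA, act_one]
  let e : EuclideanSpace ℝ (Fin 3) ≃ₗ[ℝ] EuclideanSpace ℝ (Fin 3) :=
    LinearEquiv.ofLinear (Matrix.toEuclideanLin A) (Matrix.toEuclideanLin Aᵀ) h1 h2
  have heq : (fun y => act A y + c)
      = (Homeomorph.addRight c) ∘ (e.toContinuousLinearEquiv.toHomeomorph) := rfl
  rw [heq]
  exact (Homeomorph.addRight c).isOpenMap.comp e.toContinuousLinearEquiv.toHomeomorph.isOpenMap

/-- Contrapositive form of Proposition 2, outward-moving case: if near `x ∈ M` the solid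
is the intersection of `m` half-spaces with linearly independent outward normals `N i`,
`t₀ ≤ t' < t₁` and `⟪A(t')·N i, γ_x'(t')⟫ > 0` for every `i`, then `γ_x(t')` lies in the
interior of the swept volume; in particular it is not on the envelope. -/
theorem interior_of_sweep_of_outward_moving
    (A : ℝ → Matrix (Fin 3) (Fin 3) ℝ) (b : ℝ → EuclideanSpace ℝ (Fin 3))
    (hA : ∀ t, (A t)ᵀ * A t = 1)
    (hAcont : Continuous A) (hbcont : Continuous b)
    (M : Set (EuclideanSpace ℝ (Fin 3)))
    (t₀ t₁ : ℝ) (ht : t₀ < t₁)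
    (x : EuclideanSpace ℝ (Fin 3)) (hxM : x ∈ M)
    (U : Set (EuclideanSpace ℝ (Fin 3))) (hU : IsOpen U) (hxU : x ∈ U)
    (m : ℕ) (N : Fin m → EuclideanSpace ℝ (Fin 3)) (hNli : LinearIndependent ℝ N)
    (hMU : M ∩ U = (⋂ i, {y : EuclideanSpace ℝ (Fin 3) | ⟪N i, y - x⟫ ≤ 0}) ∩ U)
    (t' : ℝ) (ht'₀ : t₀ ≤ t') (ht'₁ : t' < t₁)
    (hAdiff : ∀ i j, DifferentiableAt ℝ (fun t => A t i j) t')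
    (hbdiff : DifferentiableAt ℝ b t')
    (v : EuclideanSpace ℝ (Fin 3))
    (hv : HasDerivAt (fun t => act (A t) x + b t) v t')
    (hout : ∀ i, 0 < ⟪act (A t') (N i), v⟫) :
    act (A t') x + b t' ∈
        interior (⋃ t ∈ Set.Icc t₀ t₁, (fun y => act (A t) y + b t) '' M) ∧
      act (A t') x + b t' ∉
        frontier (⋃ t ∈ Set.Icc t₀ t₁, (fun y => act (A t) y + b t) '' M) := by
  classical
  set p : EuclideanSpace ℝ (Fin 3) := act (A t') x + b t' with hp
  set D : Matrix (Fin 3) (Fin 3) ℝ := Matrix.of fun i j => deriv (fun t => A t i j) t' with hDdef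
  have hD : ∀ i j, HasDerivAt (fun t => A t i j) (D i j) t' := fun i j => (hAdiff i j).hasDerivAt
  have hDT : ∀ i j, HasDerivAt (fun t => (A t)ᵀ i j) (Dᵀ i j) t' := fun i j => hD j i
  set b' : EuclideanSpace ℝ (Fin 3) := deriv b t' with hb'def
  have hb' : HasDerivAt b b' t' := hbdiff.hasDerivAt
  -- the derivative of the trajectory
  have hγ : HasDerivAt (fun t => act (A t) x + b t) (act D x + act (A t') 0 + b') t' :=
    (hasDerivAt_act A D hD (fun _ => x) 0 (hasDerivAt_const t' x)).add hb'
  have hveq : v = act D x + b' := by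
    have h := hv.unique hγ
    rw [h, act_zero, add_zero]
  -- the pulled-back point
  set y : ℝ → EuclideanSpace ℝ (Fin 3) := fun t => act (A t)ᵀ (p - b t) with hydef
  have hy : HasDerivAt y (act Dᵀ (p - b t') + act (A t')ᵀ (-b')) t' :=
    hasDerivAt_act (fun t => (A t)ᵀ) Dᵀ hDT (fun t => p - b t) (-b') (hb'.const_sub p)
  have hpb : p - b t' = act (A t') x := by rw [hp]; abel
  have hyt' : y t' = x := by
    rw [hydef]; simp only
    rw [hpb, act_act, hA t', act_one]
  -- orthogonality relation for derivatives
  have hrel : ∀ w z : EuclideanSpace ℝ (Fin 3),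
      ⟪act (A t') w, act D z⟫ + ⟪act D w, act (A t') z⟫ = 0 := by
    intro w z
    have h1 : HasDerivAt (fun t => ⟪act (A t) w, act (A t) z⟫)
        (⟪act (A t') w, act D z + act (A t') 0⟫ + ⟪act D w + act (A t') 0, act (A t') z⟫) t' :=
      HasDerivAt.inner ℝ
        (hasDerivAt_act A D hD (fun _ => w) 0 (hasDerivAt_const t' w))
        (hasDerivAt_act A D hD (fun _ => z) 0 (hasDerivAt_const t' z))
    have h2 : (fun t => ⟪act (A t) w, act (A t) z⟫) = fun _ => (⟪w, z⟫ : ℝ) := by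
      funext t
      rw [← inner_act_transpose (A t) w (act (A t) z), act_act, hA t, act_one]
    rw [h2] at h1
    have h3 := (hasDerivAt_const t' (⟪w, z⟫ : ℝ)).unique h1
    rw [act_zero, add_zero, add_zero] at h3
    exact h3.symm
  -- derivative of the constraint functions
  have hinner : ∀ i, HasDerivAt (fun t => (⟪N i, y t - x⟫ : ℝ)) (-⟪act (A t') (N i), v⟫) t' := by
    intro i
    have h1 := HasDerivAt.inner ℝ (hasDerivAt_const t' (N i)) (hy.sub_const x)
    have hval : (⟪N i, act Dᵀ (p - b t') + act (A t')ᵀ (-b')⟫ : ℝ) + ⟪(0 : EuclideanSpace ℝ (Fin 3)), y t' - x⟫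
        = -⟪act (A t') (N i), v⟫ := by
      rw [inner_zero_left, add_zero, hpb, inner_add_right, inner_act_transpose,
        inner_act_transpose, hveq, inner_add_right, inner_neg_right]
      have := hrel (N i) x
      linarith
    rw [hval] at h1
    exact h1
  -- eventually the constraints are strict
  have hev : ∀ i, ∀ᶠ t in nhdsWithin t' (Set.Ioi t'), (⟪N i, y t - x⟫ : ℝ) < 0 := by
    intro i
    have hs := hasDerivAt_iff_tendsto_slope.mp (hinner i)
    have hneg : -(⟪act (A t') (N i), v⟫ : ℝ) < 0 := neg_lt_zero.mpr (hout i)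
    have h2 := hs.eventually_lt_const hneg
    have h3 : ∀ᶠ t in nhdsWithin t' (Set.Ioi t'),
        slope (fun t => (⟪N i, y t - x⟫ : ℝ)) t' t < 0 :=
      h2.filter_mono (nhdsWithin_mono t' fun s hs => ne_of_gt hs)
    filter_upwards [h3, self_mem_nhdsWithin] with t hst hmem
    have hpos : (0:ℝ) < t - t' := sub_pos.mpr hmem
    have hy0 : (⟪N i, y t' - x⟫ : ℝ) = 0 := by rw [hyt']; simp
    rw [slope_def_field, hy0, sub_zero] at hst
    rcases div_neg_iff.mp hst with ⟨_, h⟩ | ⟨h, _⟩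
    · linarith
    · exact h
  -- eventually y t ∈ U
  have hUev : ∀ᶠ t in nhdsWithin t' (Set.Ioi t'), y t ∈ U := by
    have : ∀ᶠ t in nhds t', y t ∈ U :=
      hy.continuousAt (hU.mem_nhds (by rw [hyt']; exact hxU))
    exact this.filter_mono nhdsWithin_le_nhds
  have hIoc : ∀ᶠ t in nhdsWithin t' (Set.Ioi t'), t ∈ Set.Ioc t' t₁ :=
    Filter.eventually_of_mem (Ioc_mem_nhdsGT ht'₁) fun t ht => ht
  have hall : ∀ᶠ t in nhdsWithin t' (Set.Ioi t'), ∀ i, (⟪N i, y t - x⟫ : ℝ) < 0 :=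
    Filter.eventually_all.mpr hev
  obtain ⟨t, htIoc, hyU, hts⟩ := (hIoc.and (hUev.and hall)).exists
  -- the open set
  set O : Set (EuclideanSpace ℝ (Fin 3)) := U ∩ ⋂ i, {z | (⟪N i, z - x⟫ : ℝ) < 0} with hOdef
  have hOopen : IsOpen O := hU.inter (isOpen_iInter_of_finite fun i =>
    isOpen_lt (Continuous.inner continuous_const (continuous_id.sub continuous_const))
      continuous_const)
  have hOM : O ⊆ M := by
    intro z hz
    have hzMU : z ∈ M ∩ U := by
      rw [hMU]
      exact ⟨Set.mem_iInter.mpr fun i => Set.mem_setOf.mpr (le_of_lt (Set.mem_iInter.mp hz.2 i)), hz.1⟩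
    exact hzMU.1
  have hyO : y t ∈ O := ⟨hyU, Set.mem_iInter.mpr hts⟩
  have himg_open : IsOpen ((fun z => act (A t) z + b t) '' O) :=
    isOpenMap_act_add (A t) (hA t) (b t) O hOopen
  have hpmem : p ∈ (fun z => act (A t) z + b t) '' O := by
    refine ⟨y t, hyO, ?_⟩
    rw [hydef]; simp only
    rw [act_act, mul_eq_one_comm.mp (hA t), act_one]
    abel
  have hsub : (fun z => act (A t) z + b t) '' O
      ⊆ ⋃ s ∈ Set.Icc t₀ t₁, (fun z => act (A s) z + b s) '' M := by
    rintro z ⟨w, hw, hwz⟩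
    exact Set.mem_biUnion ⟨le_trans ht'₀ (le_of_lt htIoc.1), htIoc.2⟩ ⟨w, hOM hw, hwz⟩
  have hint : p ∈ interior (⋃ s ∈ Set.Icc t₀ t₁, (fun z => act (A s) z + b s) '' M) :=
    Set.mem_of_subset_of_mem (interior_maximal hsub himg_open) hpmem
  exact ⟨hint, fun hf => hf.2 hint⟩
end

section
/- (Cross-product characterization of sharp-edge contact, Section 4.1.) Let w, N₁, N₂, v ∈ ℝ³ with w ≠ 0, N₁ and N₂ linearly independent, ⟨N₁, w⟩ = ⟨N₂, w⟩ = 0, and w × v ≠ 0. Let K = {α·N₁ + β·N₂ : α ≥ 0, β ≥ 0} be the cone spanned by N₁ and N₂. Then there exists a nonzero n ∈ K with ⟨n, v⟩ = 0 if and only if w × v ∈ K or −(w × v) ∈ K. -/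
open RealInnerProductSpace

/-- Cross-product characterization of sharp-edge contact (Section 4.1): with `w ≠ 0` the
edge tangent, `N₁, N₂` linearly independent normals orthogonal to `w`, `v` the velocity
with `w × v ≠ 0`, and `K = {α • N₁ + β • N₂ : α ≥ 0, β ≥ 0}` the cone spanned by `N₁` and
`N₂`, there exists a nonzero `n ∈ K` with `⟪n, v⟫ = 0` iff `w × v ∈ K` or `-(w × v) ∈ K`. -/
theorem cross_product_sharp_edge_contact
    (w N₁ N₂ v : EuclideanSpace ℝ (Fin 3))
    (hw : w ≠ 0) (hli : LinearIndependent ℝ ![N₁, N₂])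
    (hN₁w : ⟪N₁, w⟫ = 0) (hN₂w : ⟪N₂, w⟫ = 0)
    (hwv : crossProduct w v ≠ 0) :
    (∃ n ∈ {n : EuclideanSpace ℝ (Fin 3) |
        ∃ α β : ℝ, 0 ≤ α ∧ 0 ≤ β ∧ n = α • N₁ + β • N₂}, n ≠ 0 ∧ ⟪n, v⟫ = 0) ↔
      (WithLp.toLp 2 (crossProduct w v) ∈ {n : EuclideanSpace ℝ (Fin 3) |
          ∃ α β : ℝ, 0 ≤ α ∧ 0 ≤ β ∧ n = α • N₁ + β • N₂} ∨
       WithLp.toLp 2 (-(crossProduct w v)) ∈ {n : EuclideanSpace ℝ (Fin 3) |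
          ∃ α β : ℝ, 0 ≤ α ∧ 0 ≤ β ∧ n = α • N₁ + β • N₂}) := by
  set c : EuclideanSpace ℝ (Fin 3) := WithLp.toLp 2 (crossProduct w v) with hc
  have hcv : ⟪c, v⟫ = 0 := by
    simp [hc, PiLp.inner_apply, Fin.sum_univ_three, cross_apply]; ring
  have hcw : ⟪c, w⟫ = 0 := by
    simp [hc, PiLp.inner_apply, Fin.sum_univ_three, cross_apply]; ring
  have hspan : Submodule.span ℝ ({N₁, N₂} : Set _) = (ℝ ∙ w)ᗮ := by
    apply Submodule.eq_of_le_of_finrank_eq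
    · rw [Submodule.span_le]
      rintro x (rfl | rfl) <;>
        simp_all [Submodule.mem_orthogonal_singleton_iff_inner_left, real_inner_comm]
    · have h1 : Module.finrank ℝ (Submodule.span ℝ ({N₁, N₂} : Set _)) = 2 := by
        have := finrank_span_eq_card (R := ℝ) hli
        rw [show Set.range ![N₁, N₂] = {N₁, N₂} by
          simp [Matrix.range_cons, Matrix.range_empty, Set.pair_comm]] at this
        simpa using this
      have h2 : Module.finrank ℝ (ℝ ∙ w) + Module.finrank ℝ ((ℝ ∙ w)ᗮ) = 3 := by
        rw [Submodule.finrank_add_finrank_orthogonal]; simp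
      rw [finrank_span_singleton hw, h1] at *
      omega
  have hcmem : c ∈ Submodule.span ℝ ({N₁, N₂} : Set _) := by
    rw [hspan]
    exact Submodule.mem_orthogonal_singleton_iff_inner_left.mpr hcw
  obtain ⟨a, b, hab⟩ := Submodule.mem_span_pair.mp hcmem
  have hpq : a * ⟪N₁, v⟫ + b * ⟪N₂, v⟫ = 0 := by
    have h := hcv
    rw [← hab] at h
    simpa only [inner_add_left, real_inner_smul_left] using h
  have hpq0 : ¬(⟪N₁, v⟫ = 0 ∧ ⟪N₂, v⟫ = 0) := by
    rintro ⟨hp, hq⟩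
    have hv : v ∈ (Submodule.span ℝ ({N₁, N₂} : Set _))ᗮ := by
      rw [Submodule.mem_orthogonal]
      intro u hu
      obtain ⟨s, t, rfl⟩ := Submodule.mem_span_pair.mp hu
      simp only [inner_add_left, real_inner_smul_left, hp, hq, mul_zero, add_zero]
    rw [hspan, Submodule.orthogonal_orthogonal] at hv
    obtain ⟨t, rfl⟩ := Submodule.mem_span_singleton.mp hv
    apply hwv
    show crossProduct w.ofLp (t • w).ofLp = 0
    rw [WithLp.ofLp_smul, LinearMap.map_smul, cross_self, smul_zero]
  constructor
  · rintro ⟨n, ⟨α, β, hα, hβ, rfl⟩, hn0, hnv⟩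
    have hαβ : α * ⟪N₁, v⟫ + β * ⟪N₂, v⟫ = 0 := by
      simpa only [inner_add_left, real_inner_smul_left] using hnv
    have key : a * β = b * α := by
      rcases not_and_or.mp hpq0 with hp | hq
      · have h : ⟪N₁, v⟫ * (b * α - a * β) = 0 := by linear_combination b * hαβ - β * hpq
        rcases mul_eq_zero.mp h with h' | h'
        · exact absurd h' hp
        · linarith
      · have h : ⟪N₂, v⟫ * (a * β - b * α) = 0 := by linear_combination a * hαβ - α * hpq
        rcases mul_eq_zero.mp h with h' | h'
        · exact absurd h' hq
        · linarith
    by_cases hα0 : α = 0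
    · have hβ0 : β ≠ 0 := by
        rintro rfl
        exact hn0 (by simp [hα0])
      have hβpos : 0 < β := lt_of_le_of_ne hβ (Ne.symm hβ0)
      have ha0 : a = 0 := by
        have : a * β = 0 := by rw [key, hα0, mul_zero]
        exact (mul_eq_zero.mp this).resolve_right hβ0
      rcases le_or_gt 0 b with hb | hb
      · exact Or.inl ⟨a, b, le_of_eq ha0.symm, hb, hab.symm⟩
      · refine Or.inr ⟨-a, -b, by simp [ha0], by linarith, ?_⟩
        rw [WithLp.toLp_neg, ← hc, ← hab]; module
    · have hαpos : 0 < α := lt_of_le_of_ne hα (Ne.symm hα0)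
      rcases le_or_gt 0 a with ha | ha
      · have hb : 0 ≤ b := by nlinarith [key]
        exact Or.inl ⟨a, b, ha, hb, hab.symm⟩
      · have hb : b ≤ 0 := by nlinarith [key]
        refine Or.inr ⟨-a, -b, by linarith, by linarith, ?_⟩
        rw [WithLp.toLp_neg, ← hc, ← hab]; module
  · rintro (⟨a', b', ha', hb', hceq⟩ | ⟨a', b', ha', hb', hceq⟩)
    · exact ⟨c, ⟨a', b', ha', hb', hceq⟩, fun h => hwv (by simpa [hc] using congrArg WithLp.ofLp h), hcv⟩
    · exact ⟨-c, ⟨a', b', ha', hb', by rw [hc, ← WithLp.toLp_neg]; exact hceq⟩,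
        neg_ne_zero.mpr (fun h => hwv (by simpa [hc] using congrArg WithLp.ofLp h)), by
        rw [inner_neg_left, hcv, neg_zero]⟩
end
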